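/- Quotient right-triangle spread formula (blue): if A1A2A3 is a triangle with A1A3 blue-perpendicular to A2A3 (i.e., (A3−A1)·_b(A3−A2)=0) and all quadrances are nonzero, then the blue spread at vertex A1, between the lines A1A2 and A1A3, equals Q_b(A2,A3)/Q_b(A1,A2). -/
import Mathlib


/-- Blue quadrance between two points. -/
def Qb {F : Type*} [Field F] (X Y : F × F) : F :=
  (Y.1 - X.1) ^ 2 + (Y.2 - X.2) ^ 2

/-- Blue dot product of two vectors. -/
def blueDot {F : Type*} [Field F] (u v : F × F) : F :=
  u.1 * v.1 + u.2 * v.2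

/-- Blue spread between lines with direction vectors `u` and `v`. -/
def blueSpread {F : Type*} [Field F] (u v : F × F) : F :=
  (u.1 * v.2 - u.2 * v.1) ^ 2 / ((u.1 ^ 2 + u.2 ^ 2) * (v.1 ^ 2 + v.2 ^ 2))

/-- In a blue right triangle (right vertex at `A3`), the spread at `A1` is
the quotient of the opposite quadrance by the hypotenuse quadrance. -/
theorem blue_right_triangle_spread {F : Type*} [Field F] (A1 A2 A3 : F × F)
    (hperp : blueDot (A3.1 - A1.1, A3.2 - A1.2) (A3.1 - A2.1, A3.2 - A2.2) = 0)
    (hQ1 : Qb A2 A3 ≠ 0) (hQ2 : Qb A1 A3 ≠ 0) (hQ3 : Qb A1 A2 ≠ 0) :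
    blueSpread (A2.1 - A1.1, A2.2 - A1.2) (A3.1 - A1.1, A3.2 - A1.2)
      = Qb A2 A3 / Qb A1 A2 := by
  simp only [blueSpread, Qb, blueDot] at *
  rw [div_eq_div_iff (mul_ne_zero hQ3 hQ2) hQ3]
  linear_combination
    (-((A3.1 - A1.1) * (A3.1 - A2.1) + (A3.2 - A1.2) * (A3.2 - A2.2))
      * ((A2.1 - A1.1) ^ 2 + (A2.2 - A1.2) ^ 2)) * hperp
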